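/- Let p = 2, so q = 2^s and F = GF(2^s). The binary code of the Type II ℓ=3 graph P(2,s) has minimum distance exactly q + 2. In particular, for every c ∈ F \ {0}, the indicator vector of the set {r, (x,0), (0,0)} ∪ {(y, c·y^{−1}) : y ∈ F \ {0}} is a codeword of Hamming weight q + 2. -/

import Mathlib

open scoped Classical

namespace TypeII3

/-- Variable nodes of the Type II ℓ=3 graph: the root `r`, the nodes `(x,j)` (j ∈ F, with
`x` a formal symbol), and the nodes `(i,j)` (i, j ∈ F). -/
abbrev VN (F : Type*) := Unit ⊕ (F ⊕ (F × F))

/-- Constraint nodes of the Type II ℓ=3 graph: `c_x`, the nodes `c_i` (i ∈ F), and the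
nodes `(a,b)'` (a, b ∈ F). -/
abbrev CN (F : Type*) := Unit ⊕ (F ⊕ (F × F))

/-- Adjacency of the Type II ℓ=3 graph `P(p,s)`:
`r ~ c_x`; `r ~ c_i`; `c_x ~ (x,j)`; `c_i ~ (i,j)`; `(x,j) ~ (j,b)'` for every `b`; and
`(i,j) ~ (a, j + i·a)'` for every `a`. -/
def adj (F : Type*) [Field F] : VN F → CN F → Prop
  | Sum.inl _, Sum.inl _ => True                             -- r ~ c_x
  | Sum.inl _, Sum.inr (Sum.inl _) => True                   -- r ~ c_i
  | Sum.inl _, Sum.inr (Sum.inr _) => False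
  | Sum.inr (Sum.inl _), Sum.inl _ => True                   -- (x,j) ~ c_x
  | Sum.inr (Sum.inl _), Sum.inr (Sum.inl _) => False
  | Sum.inr (Sum.inl j), Sum.inr (Sum.inr (a, _)) => a = j   -- (x,j) ~ (j,b)'
  | Sum.inr (Sum.inr _), Sum.inl _ => False
  | Sum.inr (Sum.inr (i, _)), Sum.inr (Sum.inl k) => k = i   -- c_i ~ (i,j)
  | Sum.inr (Sum.inr (i, j)), Sum.inr (Sum.inr (a, b)) => b = j + i * a

end TypeII3

/-- Hamming weight of a vector: the number of nonzero coordinates. -/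
noncomputable def hamWt {V K : Type*} [Zero K] (x : V → K) : ℕ :=
  Nat.card {v : V // x v ≠ 0}

namespace TypeII3

/-- The code of the Type II ℓ=3 graph over `K`. -/
def InCode (F : Type*) [Field F] [Fintype F] (K : Type*) [AddCommMonoid K]
    (x : VN F → K) : Prop :=
  ∀ c : CN F, (∑ v : VN F, if adj F v c then x v else 0) = 0

/-- The minimum distance of the code of the Type II ℓ=3 graph over `K`. -/
noncomputable def dmin (F : Type*) [Field F] [Fintype F]
    (K : Type*) [AddCommMonoid K] : ℕ :=
  sInf {w | ∃ x : VN F → K, InCode F K x ∧ x ≠ 0 ∧ hamWt x = w}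

end TypeII3

/-- The indicator vector of `{r, (x,0), (0,0)} ∪ {(y, c·y⁻¹) : y ∈ F \ {0}}`. -/
noncomputable def cw (F : Type*) [Field F] (c : F) : TypeII3.VN F → ZMod 2
  | Sum.inl _ => 1
  | Sum.inr (Sum.inl j) => if j = 0 then 1 else 0
  | Sum.inr (Sum.inr (i, j)) =>
      if (i = 0 ∧ j = 0) ∨ (i ≠ 0 ∧ j = c * i⁻¹) then 1 else 0

namespace StmtAux

open TypeII3

variable {F : Type*} [Field F] [Fintype F]

/-! ### Constraint sum decompositions -/

lemma sum_cx (x : VN F → ZMod 2) :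
    (∑ v : VN F, if adj F v (Sum.inl ()) then x v else 0)
      = x (Sum.inl ()) + ∑ j : F, x (Sum.inr (Sum.inl j)) := by
  rw [Fintype.sum_sum_type, Fintype.sum_sum_type]
  simp [adj]

lemma sum_ci (x : VN F → ZMod 2) (k : F) :
    (∑ v : VN F, if adj F v (Sum.inr (Sum.inl k)) then x v else 0)
      = x (Sum.inl ()) + ∑ j : F, x (Sum.inr (Sum.inr (k, j))) := by
  rw [Fintype.sum_sum_type, Fintype.sum_sum_type]
  simp only [adj, if_true, if_false, Finset.sum_const_zero]
  rw [Fintype.sum_prod_type, Finset.sum_comm]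
  simp
  exact Finset.sum_congr rfl fun j _ => (Finset.sum_eq_single k (fun i _ hi => if_neg (Ne.symm hi)) (fun h => absurd (Finset.mem_univ k) h)).trans (if_pos rfl)

lemma sum_cab (x : VN F → ZMod 2) (a b : F) :
    (∑ v : VN F, if adj F v (Sum.inr (Sum.inr (a, b))) then x v else 0)
      = x (Sum.inr (Sum.inl a)) + ∑ i : F, x (Sum.inr (Sum.inr (i, b - i * a))) := by
  rw [Fintype.sum_sum_type, Fintype.sum_sum_type]
  simp only [adj, if_true, if_false, Finset.sum_const_zero]
  rw [Fintype.sum_prod_type]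
  have h1 : (∑ j : F, if a = j then x (Sum.inr (Sum.inl j)) else 0)
      = x (Sum.inr (Sum.inl a)) := by
    simp [Finset.sum_ite_eq]
  have h2 : ∀ i : F,
      (∑ j : F, if b = j + i * a then x (Sum.inr (Sum.inr (i, j))) else 0)
        = x (Sum.inr (Sum.inr (i, b - i * a))) := by
    intro i
    have h : ∀ j : F, (if b = j + i * a then x (Sum.inr (Sum.inr (i, j))) else 0)
        = (if b - i * a = j then x (Sum.inr (Sum.inr (i, j))) else 0) :=
      fun j => if_congr (by rw [sub_eq_iff_eq_add]) rfl rfl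
    rw [Finset.sum_congr rfl fun j _ => h j, Finset.sum_ite_eq]
    simp
  convert_to (0 : ZMod 2) + ((∑ j : F, if a = j then x (Sum.inr (Sum.inl j)) else 0) + ∑ i : F, (∑ j : F, if b = j + i * a then x (Sum.inr (Sum.inr (i, j))) else 0)) = _
  · congr 1
    · exact Finset.sum_eq_zero fun i _ => by simp
  rw [h1, Finset.sum_congr rfl fun i _ => h2 i]
  simp

/-! ### Hamming weight decomposition -/

lemma hamWt_decomp (x : VN F → ZMod 2) :
    hamWt x = (if x (Sum.inl ()) ≠ 0 then 1 else 0)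
      + (Finset.univ.filter fun j : F => x (Sum.inr (Sum.inl j)) ≠ 0).card
      + (Finset.univ.filter fun p : F × F => x (Sum.inr (Sum.inr p)) ≠ 0).card := by
  rw [hamWt, Nat.card_eq_fintype_card, Fintype.card_subtype, Finset.card_filter,
    Fintype.sum_sum_type, Fintype.sum_sum_type, Finset.card_filter, Finset.card_filter]
  simp [add_assoc]

/-! ### Arithmetic in characteristic two -/

lemma sq_inj [CharP F 2] : Function.Injective (fun i : F => i * i) := by
  intro i r h
  simp only at h
  have h2 : (2 : F) = 0 := CharTwo.two_eq_zero
  have hsq : (i + r) * (i + r) = 0 := by linear_combination h + (i * r + r * r) * h2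
  have h3 : i + r = 0 := mul_self_eq_zero.mp hsq
  have h4 : i = -r := eq_neg_of_add_eq_zero_left h3
  rwa [CharTwo.neg_eq] at h4

lemma quad_count [CharP F 2] (a b c : F) (hc : c ≠ 0) :
    (∑ i : F, if a * (i * i) + b * i = c then (1 : ZMod 2) else 0)
      = (if a = 0 then 1 else 0) + (if b = 0 then 1 else 0) := by
  have h2 : (2 : F) = 0 := CharTwo.two_eq_zero
  by_cases ha : a = 0
  · by_cases hb : b = 0
    · rw [if_pos ha, if_pos hb]
      have h : ∀ i : F, (a * (i * i) + b * i = c) ↔ False := by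
        intro i; simp [ha, hb, Ne.symm hc, eq_comm]
      simp only [h, if_false, Finset.sum_const_zero]
      decide
    · rw [if_pos ha, if_neg hb]
      have h : ∀ i : F, (a * (i * i) + b * i = c) ↔ i = b⁻¹ * c := by
        intro i; rw [ha, zero_mul, zero_add, eq_inv_mul_iff_mul_eq₀ hb]
      simp only [h]
      rw [Finset.sum_ite_eq']
      simp
  · by_cases hb : b = 0
    · rw [if_neg ha, if_pos hb]
      obtain ⟨r, hr⟩ := (Finite.injective_iff_surjective.mp (sq_inj (F := F))) (a⁻¹ * c)
      simp only at hr
      have h : ∀ i : F, (a * (i * i) + b * i = c) ↔ i = r := by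
        intro i
        rw [hb, zero_mul, add_zero]
        constructor
        · intro h
          have hii : i * i = a⁻¹ * c := (eq_inv_mul_iff_mul_eq₀ ha).mpr h
          exact sq_inj (F := F) (hii.trans hr.symm)
        · rintro rfl
          rw [hr, ← mul_assoc, mul_inv_cancel₀ ha, one_mul]
      simp only [h]
      rw [Finset.sum_ite_eq']
      simp
    · rw [if_neg ha, if_neg hb, add_zero]
      set t : F := b * a⁻¹ with ht
      have hat : a * t = b := by rw [ht, mul_comm, mul_assoc, inv_mul_cancel₀ ha, mul_one]
      refine Finset.sum_involution (fun i _ => i + t) ?_ ?_ (fun i _ => Finset.mem_univ _) ?_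
      · intro i _
        have hkey : a * ((i + t) * (i + t)) + b * (i + t) = a * (i * i) + b * i := by
          linear_combination (2 * i + t) * hat + (b * i + b * t) * h2
        rw [hkey]
        by_cases h : a * (i * i) + b * i = c <;> simp [h, CharTwo.add_self_eq_zero]
      · intro i _ _ heq
        have hbz : b * a⁻¹ = 0 := by linear_combination heq
        rcases mul_eq_zero.mp hbz with h | h
        · exact hb h
        · exact inv_ne_zero ha h
      · intro i _
        have h2t : (2 : F) * t = 0 := by rw [h2, zero_mul]
        linear_combination h2t

lemma z2 : ∀ u w : ZMod 2, u + w = 0 → w = u := by decide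

/-! ### The explicit codeword -/

lemma cw_cond (c : F) (i j : F) :
    ((i = 0 ∧ j = 0) ∨ (i ≠ 0 ∧ j = c * i⁻¹)) ↔ j = (if i = 0 then 0 else c * i⁻¹) := by
  by_cases h : i = 0 <;> simp [h]

lemma cw_incode [CharP F 2] (c : F) (hc : c ≠ 0) : InCode F (ZMod 2) (cw F c) := by
  have h2 : (2 : F) = 0 := CharTwo.two_eq_zero
  intro ch
  match ch with
  | Sum.inl () =>
    rw [sum_cx]
    have h : (∑ j : F, cw F c (Sum.inr (Sum.inl j))) = 1 := by
      simp only [cw]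
      rw [Finset.sum_ite_eq']
      simp
    rw [h]
    show (1 : ZMod 2) + 1 = 0
    decide
  | Sum.inr (Sum.inl k) =>
    rw [sum_ci]
    have h : (∑ j : F, cw F c (Sum.inr (Sum.inr (k, j)))) = 1 := by
      simp only [cw, cw_cond c k]
      rw [Finset.sum_ite_eq']
      simp
    rw [h]
    show (1 : ZMod 2) + 1 = 0
    decide
  | Sum.inr (Sum.inr (a, b)) =>
    rw [sum_cab]
    have hterm : ∀ i : F, cw F c (Sum.inr (Sum.inr (i, b - i * a)))
        = (if i = 0 ∧ b = 0 then (1 : ZMod 2) else 0)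
          + (if a * (i * i) + b * i = c then (1 : ZMod 2) else 0) := by
      intro i
      by_cases hi : i = 0
      · have hq : ¬(a * (i * i) + b * i = c) := by
          rw [hi]; simpa [eq_comm] using hc
        simp only [cw, hi]
        simp [hq, Ne.symm hc]
      · have hiff : (b - i * a = c * i⁻¹) ↔ (a * (i * i) + b * i = c) := by
          rw [show c * i⁻¹ = c / i from by rw [div_eq_mul_inv], eq_div_iff hi]
          constructor
          · intro h; linear_combination h + (i * i * a) * h2
          · intro h; linear_combination h - (i * i * a) * h2
        simp only [cw, hi]
        simp only [false_and, false_or, ne_eq, not_false_eq_true, true_and, hiff]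
        simp [hi]
    rw [Finset.sum_congr rfl fun i _ => hterm i, Finset.sum_add_distrib]
    have hA : (∑ i : F, if i = 0 ∧ b = 0 then (1 : ZMod 2) else 0)
        = if b = 0 then 1 else 0 := by
      by_cases hb : b = 0
      · simp only [hb, and_true]
        rw [Finset.sum_ite_eq']
        simp
      · simp [hb]
    rw [hA, quad_count a b c hc]
    have hcw : cw F c (Sum.inr (Sum.inl a)) = if a = 0 then 1 else 0 := rfl
    rw [hcw]
    by_cases ha : a = 0 <;> by_cases hb : b = 0 <;> simp [ha, hb] <;> decide

lemma cw_ne_zero (c : F) : cw F c ≠ 0 := by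
  intro h
  have h1 := congrFun h (Sum.inl ())
  simp only [cw, Pi.zero_apply] at h1
  exact one_ne_zero h1

lemma cw_wt (c : F) (hc : c ≠ 0) : hamWt (cw F c) = Fintype.card F + 2 := by
  rw [hamWt_decomp]
  have h1 : (if cw F c (Sum.inl ()) ≠ 0 then 1 else 0) = 1 := by
    simp [cw]
  have h2 : (Finset.univ.filter fun j : F => cw F c (Sum.inr (Sum.inl j)) ≠ 0) = {0} := by
    ext j
    by_cases h : j = 0 <;> simp [cw, h]
  have h3 : (Finset.univ.filter fun p : F × F => cw F c (Sum.inr (Sum.inr p)) ≠ 0)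
      = Finset.univ.image (fun i : F => (i, if i = 0 then 0 else c * i⁻¹)) := by
    ext ⟨i, j⟩
    simp only [Finset.mem_filter, Finset.mem_univ, true_and, Finset.mem_image]
    constructor
    · intro h
      have hD : (i = 0 ∧ j = 0) ∨ (i ≠ 0 ∧ j = c * i⁻¹) := by
        by_contra hD
        simp only [cw, if_neg hD, ne_eq, not_true_eq_false] at h
      rw [cw_cond c] at hD
      exact ⟨i, by rw [hD]⟩
    · rintro ⟨i', hi'⟩
      obtain ⟨h1, hj⟩ := Prod.ext_iff.mp hi'
      simp only at h1 hj
      subst h1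
      subst hj
      have hD : (i' = 0 ∧ (if i' = 0 then (0:F) else c * i'⁻¹) = 0)
          ∨ (i' ≠ 0 ∧ (if i' = 0 then (0:F) else c * i'⁻¹) = c * i'⁻¹) :=
        (cw_cond c i' _).mpr rfl
      simp only [cw, if_pos hD]
      exact one_ne_zero
  rw [h1, h2, h3, Finset.card_singleton,
    Finset.card_image_of_injective _ (fun i i' h => (Prod.ext_iff.mp h).1),
    Finset.card_univ]
  omega

/-! ### Lower bound -/

lemma lower_bound [CharP F 2] (x : VN F → ZMod 2)
    (hx : InCode F (ZMod 2) x) (hne : x ≠ 0) :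
    Fintype.card F + 2 ≤ hamWt x := by
  have hcx : x (Sum.inl ()) + ∑ j : F, x (Sum.inr (Sum.inl j)) = 0 := by
    rw [← sum_cx]; exact hx (Sum.inl ())
  have hci : ∀ k : F, x (Sum.inl ()) + ∑ j : F, x (Sum.inr (Sum.inr (k, j))) = 0 := by
    intro k; rw [← sum_ci]; exact hx (Sum.inr (Sum.inl k))
  have hab : ∀ a b : F,
      x (Sum.inr (Sum.inl a)) + ∑ i : F, x (Sum.inr (Sum.inr (i, b - i * a))) = 0 := by
    intro a b; rw [← sum_cab]; exact hx (Sum.inr (Sum.inr (a, b)))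
  rw [hamWt_decomp]
  set Su := Finset.univ.filter fun j : F => x (Sum.inr (Sum.inl j)) ≠ 0 with hSu
  set Sv := Finset.univ.filter fun p : F × F => x (Sum.inr (Sum.inr p)) ≠ 0 with hSv
  rcases eq_or_ne (x (Sum.inl ())) 0 with hr | hr
  · by_cases hu : ∀ j : F, x (Sum.inr (Sum.inl j)) = 0
    · -- all-lines case: pick a point of the plane part
      have hv : ∃ p : F × F, x (Sum.inr (Sum.inr p)) ≠ 0 := by
        by_contra h
        push_neg at h
        apply hne
        funext w
        match w with
        | Sum.inl () => exact hr
        | Sum.inr (Sum.inl j) => exact hu j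
        | Sum.inr (Sum.inr p) => exact h p
      obtain ⟨⟨i₀, j₀⟩, hP⟩ := hv
      have key : ∀ a : F, ∃ i, i ≠ i₀ ∧
          x (Sum.inr (Sum.inr (i, (j₀ + i₀ * a) - i * a))) ≠ 0 := by
        intro a
        have h1 := hab a (j₀ + i₀ * a)
        rw [hu a, zero_add] at h1
        by_contra hcon
        push_neg at hcon
        rw [Finset.sum_eq_single_of_mem i₀ (Finset.mem_univ i₀)
          (fun i _ hii => hcon i hii)] at h1
        rw [add_sub_cancel_right] at h1
        exact hP h1
      have key2 : ∃ j, j ≠ j₀ ∧ x (Sum.inr (Sum.inr (i₀, j))) ≠ 0 := by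
        have h1 := hci i₀
        rw [hr, zero_add] at h1
        by_contra hcon
        push_neg at hcon
        rw [Finset.sum_eq_single_of_mem j₀ (Finset.mem_univ j₀)
          (fun j _ hjj => hcon j hjj)] at h1
        exact hP h1
      obtain ⟨j₁, hj₁, hvj₁⟩ := key2
      choose ψ hψne hψv using key
      set T : Finset (F × F) :=
        Finset.univ.image (fun a : F => (ψ a, (j₀ + i₀ * a) - ψ a * a)) with hT
      have hinj : Set.InjOn (fun a : F => (ψ a, (j₀ + i₀ * a) - ψ a * a))
          (Finset.univ : Finset F) := by
        intro a _ a' _ h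
        obtain ⟨h1, hrest⟩ := Prod.ext_iff.mp h
        simp only at h1 hrest
        rw [h1] at hrest
        have h3 : (i₀ - ψ a') * a = (i₀ - ψ a') * a' := by linear_combination hrest
        exact mul_left_cancel₀ (sub_ne_zero.mpr (Ne.symm (hψne a'))) h3
      have hTcard : T.card = Fintype.card F := by
        rw [hT, Finset.card_image_of_injOn hinj, Finset.card_univ]
      have hT1 : (i₀, j₁) ∉ T := by
        intro hmem
        rw [hT, Finset.mem_image] at hmem
        obtain ⟨a, _, ha⟩ := hmem
        exact hψne a (Prod.ext_iff.mp ha).1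
      have hT0 : (i₀, j₀) ∉ insert (i₀, j₁) T := by
        intro hmem
        rcases Finset.mem_insert.mp hmem with h | h
        · exact hj₁ ((Prod.ext_iff.mp h).2.symm)
        · rw [hT, Finset.mem_image] at h
          obtain ⟨a, _, ha⟩ := h
          exact hψne a (Prod.ext_iff.mp ha).1
      have hsub : insert (i₀, j₀) (insert (i₀, j₁) T) ⊆ Sv := by
        intro p hp
        rcases Finset.mem_insert.mp hp with h | h
        · subst h; exact Finset.mem_filter.mpr ⟨Finset.mem_univ _, hP⟩
        rcases Finset.mem_insert.mp h with h | h
        · subst h; exact Finset.mem_filter.mpr ⟨Finset.mem_univ _, hvj₁⟩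
        · rw [hT, Finset.mem_image] at h
          obtain ⟨a, _, ha⟩ := h
          subst ha
          exact Finset.mem_filter.mpr ⟨Finset.mem_univ _, hψv a⟩
      have hcard : Fintype.card F + 2 ≤ Sv.card := by
        have := Finset.card_le_card hsub
        rwa [Finset.card_insert_of_notMem hT0, Finset.card_insert_of_notMem hT1,
          hTcard] at this
      omega
    · push_neg at hu
      obtain ⟨a₀, ha₀⟩ := hu
      have hsu : (∑ j : F, x (Sum.inr (Sum.inl j))) = 0 := by
        rw [hr, zero_add] at hcx; exact hcx
      have ha₁ : ∃ a₁, a₁ ≠ a₀ ∧ x (Sum.inr (Sum.inl a₁)) ≠ 0 := by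
        by_contra h
        push_neg at h
        rw [Finset.sum_eq_single_of_mem a₀ (Finset.mem_univ a₀)
          (fun a _ haa => h a haa)] at hsu
        exact ha₀ hsu
      obtain ⟨a₁, ha₁ne, ha₁v⟩ := ha₁
      have hSucard : 2 ≤ Su.card := by
        apply Finset.one_lt_card.mpr
        exact ⟨a₀, Finset.mem_filter.mpr ⟨Finset.mem_univ _, ha₀⟩,
          a₁, Finset.mem_filter.mpr ⟨Finset.mem_univ _, ha₁v⟩, Ne.symm ha₁ne⟩
      have key : ∀ b : F, ∃ i, x (Sum.inr (Sum.inr (i, b - i * a₀))) ≠ 0 := by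
        intro b
        have h1 := hab a₀ b
        have h2 := z2 _ _ h1
        have h3 : (∑ i : F, x (Sum.inr (Sum.inr (i, b - i * a₀)))) ≠ 0 := by
          rw [h2]; exact ha₀
        obtain ⟨i, _, hi⟩ := Finset.exists_ne_zero_of_sum_ne_zero h3
        exact ⟨i, hi⟩
      choose ψ hψ using key
      have hle : Fintype.card F ≤ Sv.card := by
        rw [← Finset.card_univ (α := F)]
        apply Finset.card_le_card_of_injOn (fun b : F => (ψ b, b - ψ b * a₀))
        · intro b _
          exact Finset.mem_filter.mpr ⟨Finset.mem_univ _, hψ b⟩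
        · intro b _ b' _ h
          obtain ⟨h1, hrest⟩ := Prod.ext_iff.mp h
          simp only at h1 hrest
          rw [h1] at hrest
          linear_combination hrest
      omega
  · -- root is nonzero
    have hroot : (if x (Sum.inl ()) ≠ 0 then 1 else 0) = 1 := if_pos hr
    have hsu : (∑ j : F, x (Sum.inr (Sum.inl j))) ≠ 0 := by
      rw [z2 _ _ hcx]; exact hr
    obtain ⟨j', _, hj'⟩ := Finset.exists_ne_zero_of_sum_ne_zero hsu
    have hSucard : 1 ≤ Su.card :=
      Finset.card_pos.mpr ⟨j', Finset.mem_filter.mpr ⟨Finset.mem_univ _, hj'⟩⟩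
    have key : ∀ i : F, ∃ j, x (Sum.inr (Sum.inr (i, j))) ≠ 0 := by
      intro i
      have h1 := hci i
      have h3 : (∑ j : F, x (Sum.inr (Sum.inr (i, j)))) ≠ 0 := by
        rw [z2 _ _ h1]; exact hr
      obtain ⟨j, _, hj⟩ := Finset.exists_ne_zero_of_sum_ne_zero h3
      exact ⟨j, hj⟩
    choose ψ hψ using key
    have hle : Fintype.card F ≤ Sv.card := by
      rw [← Finset.card_univ (α := F)]
      apply Finset.card_le_card_of_injOn (fun i : F => (i, ψ i))
      · intro i _
        exact Finset.mem_filter.mpr ⟨Finset.mem_univ _, hψ i⟩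
      · intro i _ i' _ h
        exact (Prod.ext_iff.mp h).1
    omega

lemma charP_two (s : ℕ) (hF : Fintype.card F = 2 ^ s) (hs : 0 < s) : CharP F 2 := by
  haveI := ringChar.charP F
  obtain ⟨n, hp, hcard⟩ := FiniteField.card F (ringChar F)
  have h2 : ringChar F = 2 := by
    have hd : ringChar F ∣ 2 ^ s := by
      rw [← hF, hcard]; exact dvd_pow_self _ n.pos.ne'
    have := hp.dvd_of_dvd_pow (n := s) (by simpa using hd)
    exact (Nat.prime_dvd_prime_iff_eq hp Nat.prime_two).mp this
  rw [← h2]; infer_instance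

end StmtAux

theorem stmt_10 (s : ℕ) (hs : 0 < s)
    (F : Type*) [Field F] [Fintype F] (hF : Fintype.card F = 2 ^ s) :
    -- the binary code of P(2,s) has minimum distance exactly q + 2
    TypeII3.dmin F (ZMod 2) = 2 ^ s + 2 ∧
    -- and for every c ≠ 0 the given indicator vector is a codeword of weight q + 2
    (∀ c : F, c ≠ 0 →
      TypeII3.InCode F (ZMod 2) (cw F c) ∧ hamWt (cw F c) = 2 ^ s + 2) := by
  haveI : CharP F 2 := StmtAux.charP_two s hF hs
  have hpart2 : ∀ c : F, c ≠ 0 →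
      TypeII3.InCode F (ZMod 2) (cw F c) ∧ hamWt (cw F c) = 2 ^ s + 2 := by
    intro c hc
    exact ⟨StmtAux.cw_incode c hc, by rw [StmtAux.cw_wt c hc, hF]⟩
  refine ⟨?_, hpart2⟩
  obtain ⟨c, hc⟩ := Fintype.exists_ne_of_one_lt_card
    (by rw [hF]; exact Nat.one_lt_two_pow_iff.mpr hs.ne') (0 : F)
  have hmem : (2 ^ s + 2) ∈
      {w | ∃ x : TypeII3.VN F → ZMod 2,
        TypeII3.InCode F (ZMod 2) x ∧ x ≠ 0 ∧ hamWt x = w} :=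
    ⟨cw F c, (hpart2 c hc).1, StmtAux.cw_ne_zero c, (hpart2 c hc).2⟩
  rw [TypeII3.dmin]
  apply le_antisymm
  · exact Nat.sInf_le hmem
  · obtain ⟨x, hx, hxne, hw⟩ := Nat.sInf_mem ⟨_, hmem⟩
    have := StmtAux.lower_bound x hx hxne
    rw [hF] at this
    omega
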